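/- Let φ and ψ be qpf formulas, x0,x1,…,xk variables, and r a relation symbol of arity k; for a formula χ let ∃∃χ denote its existential closure. Then: (1) tw([[∃∃(φ * x0=x1 * … * x0=xk)]]) ≤ tw([[∃∃φ]]); (2) if φ * x0≠x1 * … * x0≠xk is satisfiable, then tw([[∃∃φ]]) − 1 ≤ tw([[∃∃(φ * x0≠x1 * … * x0≠xk)]]) ≤ tw([[∃∃φ]]); (3) if φ * r(x1,…,xk) is satisfiable, then tw([[∃∃φ]]) − 1 ≤ tw([[∃∃(φ * r(x1,…,xk))]]) ≤ tw([[∃∃φ]]) + k; (4) if ψ contains only relation atoms, then tw([[∃∃(φ*ψ)]]) ≤ tw([[∃∃φ]]) + |fv(ψ)|. -/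

import Mathlib

/-!
Common definitions for the formalization of
"The Treewidth Boundedness Problem for an Inductive Separation Logic of Relations".
-/

namespace SLRTW

/-! ### Relational structures over a fixed universe `V` -/

/-- A structure over the relational signature given by `Rel`, `ar` with universe `V`:
each relation symbol is interpreted as a finite set of tuples, and only finitely many
relation symbols have a nonempty interpretation. -/
structure Str (Rel : Type) (ar : Rel → ℕ) (V : Type) where
  interp : ∀ r : Rel, Set (Fin (ar r) → V)
  finite_interp : ∀ r, (interp r).Finite
  finite_active : {r : Rel | interp r ≠ ∅}.Finite

/-- Formulas of the separation logic of relations, over relation symbols `Rel` (with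
arities `ar`) and predicate symbols `Pr` (with arities `pa`).  Variables are natural
numbers; by convention, the parameters of a predicate of arity `n` are `0, …, n-1`. -/
inductive SLR (Rel : Type) (ar : Rel → ℕ) (Pr : Type) (pa : Pr → ℕ) : Type where
  | emp : SLR Rel ar Pr pa
  | eq (x y : ℕ) : SLR Rel ar Pr pa
  | ne (x y : ℕ) : SLR Rel ar Pr pa
  | rel (r : Rel) (a : Fin (ar r) → ℕ) : SLR Rel ar Pr pa
  | pred (A : Pr) (a : Fin (pa A) → ℕ) : SLR Rel ar Pr pa
  | star (φ ψ : SLR Rel ar Pr pa) : SLR Rel ar Pr pa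
  | ex (x : ℕ) (φ : SLR Rel ar Pr pa) : SLR Rel ar Pr pa

/-- An RGB color scheme: a partition of the set of colors `𝒫(Rel)` into red, green
and blue colors, such that any two blue colors intersect, every green color intersects
every blue color, and every red color is disjoint from some blue color. -/
structure RGB (Rel : Type) where
  red : Set (Set Rel)
  green : Set (Set Rel)
  blue : Set (Set Rel)
  cover : ∀ C : Set Rel, C ∈ red ∨ C ∈ green ∨ C ∈ blue
  red_green : red ∩ green = ∅
  red_blue : red ∩ blue = ∅
  green_blue : green ∩ blue = ∅
  blue_blue_meet : ∀ C1 ∈ blue, ∀ C2 ∈ blue, (C1 ∩ C2).Nonempty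
  green_blue_meet : ∀ C1 ∈ green, ∀ C2 ∈ blue, (C1 ∩ C2).Nonempty
  red_sep : ∀ C1 ∈ red, ∃ C2 ∈ blue, C1 ∩ C2 = ∅

section Defs1

variable {Rel : Type} {ar : Rel → ℕ} {V : Type} {Pr : Type} {pa : Pr → ℕ}

/-- The support of a structure: the elements occurring in some tuple. -/
def Str.supp (S : Str Rel ar V) : Set V :=
  { u | ∃ (r : Rel) (t : Fin (ar r) → V), t ∈ S.interp r ∧ ∃ i, t i = u }

/-- Two structures are locally disjoint iff their interpretations are pointwise disjoint. -/
def LocDisj (S1 S2 : Str Rel ar V) : Prop :=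
  ∀ r, S1.interp r ∩ S2.interp r = ∅

/-- Composition of structures (pointwise union of the interpretations). -/
def Str.comp (S1 S2 : Str Rel ar V) : Str Rel ar V where
  interp r := S1.interp r ∪ S2.interp r
  finite_interp r := (S1.finite_interp r).union (S2.finite_interp r)
  finite_active := by
    refine (S1.finite_active.union S2.finite_active).subset ?_
    intro r hr
    simp only [Set.mem_setOf_eq, Set.mem_union, ne_eq] at hr ⊢
    rw [Set.union_empty_iff] at hr
    tauto

/-- Composition of a finite family of structures. -/
def bigComp {n : ℕ} (Ss : Fin n → Str Rel ar V) : Str Rel ar V where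
  interp r := ⋃ i, (Ss i).interp r
  finite_interp r := Set.finite_iUnion fun i => (Ss i).finite_interp r
  finite_active := by
    refine (Set.finite_iUnion fun i => (Ss i).finite_active).subset ?_
    intro r hr
    simp only [Set.mem_setOf_eq, ne_eq, Set.iUnion_eq_empty, Set.mem_iUnion] at hr ⊢
    push_neg at hr
    obtain ⟨i, hi⟩ := hr
    exact ⟨i, Set.nonempty_iff_ne_empty.mp hi⟩

/-- A tree decomposition of a structure: a finite tree whose nodes carry finite bags of
elements, covering every tuple, and such that the set of nodes containing any given
support element is nonempty and connected. -/
structure TreeDecomp (S : Str Rel ar V) where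
  ι : Type
  instFin : Fintype ι
  G : SimpleGraph ι
  isTree : G.IsTree
  bag : ι → Finset V
  bag_cover : ∀ (r : Rel), ∀ t ∈ S.interp r, ∃ n : ι, ∀ i, t i ∈ bag n
  bag_conn : ∀ u ∈ S.supp, (SimpleGraph.induce {n : ι | u ∈ bag n} G).Connected

attribute [instance] TreeDecomp.instFin

/-- The width of a tree decomposition: maximal bag size minus one. -/
def TreeDecomp.width {S : Str Rel ar V} (T : TreeDecomp S) : ℕ :=
  (Finset.univ.sup fun n : T.ι => (T.bag n).card) - 1

/-- The treewidth of a structure: the minimal width of a tree decomposition. -/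
noncomputable def tw (S : Str Rel ar V) : ℕ :=
  sInf { w | ∃ T : TreeDecomp S, T.width = w }

/-- A set of structures is treewidth-bounded iff the treewidths of its members are
bounded. -/
def TWB (𝒮 : Set (Str Rel ar V)) : Prop :=
  ∃ k : ℕ, ∀ S ∈ 𝒮, tw S ≤ k

/-- The supremum of the treewidths of a set of structures (in `ℕ∞`). -/
noncomputable def twSet (𝒮 : Set (Str Rel ar V)) : ℕ∞ :=
  ⨆ S ∈ 𝒮, (tw S : ℕ∞)

namespace SLR

/-- Free variables of a formula. -/
def fv : SLR Rel ar Pr pa → Set ℕ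
  | .emp => ∅
  | .eq x y => {x, y}
  | .ne x y => {x, y}
  | .rel _ a => Set.range a
  | .pred _ a => Set.range a
  | .star φ ψ => φ.fv ∪ ψ.fv
  | .ex x φ => φ.fv \ {x}

/-- All variables (free or bound) occurring in a formula. -/
def vars : SLR Rel ar Pr pa → Set ℕ
  | .emp => ∅
  | .eq x y => {x, y}
  | .ne x y => {x, y}
  | .rel _ a => Set.range a
  | .pred _ a => Set.range a
  | .star φ ψ => φ.vars ∪ ψ.vars
  | .ex x φ => insert x φ.vars

/-- Predicate-free formulas. -/
def PredFree : SLR Rel ar Pr pa → Prop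
  | .pred _ _ => False
  | .star φ ψ => φ.PredFree ∧ ψ.PredFree
  | .ex _ φ => φ.PredFree
  | _ => True

/-- Quantifier- and predicate-free (qpf) formulas. -/
def QPF : SLR Rel ar Pr pa → Prop
  | .pred _ _ => False
  | .ex _ _ => False
  | .star φ ψ => φ.QPF ∧ ψ.QPF
  | _ => True

/-- Formulas containing only relation atoms. -/
def RelOnly : SLR Rel ar Pr pa → Prop
  | .rel _ _ => True
  | .star φ ψ => φ.RelOnly ∧ ψ.RelOnly
  | _ => False

/-- Formulas containing only equality atoms (and `emp`). -/
def EqOnly : SLR Rel ar Pr pa → Prop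
  | .emp => True
  | .eq _ _ => True
  | .star φ ψ => φ.EqOnly ∧ ψ.EqOnly
  | _ => False

/-- Equality-free formulas: no equality atom and no predicate atom in which the same
variable occurs twice. -/
def EqFreeF : SLR Rel ar Pr pa → Prop
  | .eq _ _ => False
  | .pred _ a => Function.Injective a
  | .star φ ψ => φ.EqFreeF ∧ ψ.EqFreeF
  | .ex _ φ => φ.EqFreeF
  | _ => True

/-- The number of predicate atoms occurring in a formula. -/
def npred : SLR Rel ar Pr pa → ℕ
  | .pred _ _ => 1
  | .star φ ψ => φ.npred + ψ.npred
  | .ex _ φ => φ.npred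
  | _ => 0

/-- The number of relation atoms occurring in a formula. -/
def nrel : SLR Rel ar Pr pa → ℕ
  | .rel _ _ => 1
  | .star φ ψ => φ.nrel + ψ.nrel
  | .ex _ φ => φ.nrel
  | _ => 0

/-- The set of relation symbols occurring in a formula. -/
def rels : SLR Rel ar Pr pa → Set Rel
  | .rel r _ => {r}
  | .star φ ψ => φ.rels ∪ ψ.rels
  | .ex _ φ => φ.rels
  | _ => ∅

/-- The set of predicate symbols occurring in a formula. -/
def preds : SLR Rel ar Pr pa → Set Pr
  | .pred A _ => {A}
  | .star φ ψ => φ.preds ∪ ψ.preds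
  | .ex _ φ => φ.preds
  | _ => ∅

/-- The quantifier-free matrix of a formula (erasing all existential quantifiers). -/
def matrix : SLR Rel ar Pr pa → SLR Rel ar Pr pa
  | .ex _ φ => φ.matrix
  | .star φ ψ => .star φ.matrix ψ.matrix
  | φ => φ

/-- The list of bound variables of a formula. -/
def binders : SLR Rel ar Pr pa → List ℕ
  | .ex x φ => x :: φ.binders
  | .star φ ψ => φ.binders ++ ψ.binders
  | _ => []

/-- A formula is well-named iff its bound variables are pairwise distinct and distinct
from its free variables.  For a well-named formula, the matrix faithfully represents
the prenex form. -/
def WellNamed (χ : SLR Rel ar Pr pa) : Prop :=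
  χ.binders.Nodup ∧ ∀ x ∈ χ.binders, x ∉ χ.fv

/-- The disequality `x ≠ y` occurs in the formula (as an unordered pair). -/
def neOccurs : SLR Rel ar Pr pa → ℕ → ℕ → Prop
  | .ne a b, x, y => (a = x ∧ b = y) ∨ (a = y ∧ b = x)
  | .star φ ψ, x, y => φ.neOccurs x y ∨ ψ.neOccurs x y
  | .ex _ φ, x, y => φ.neOccurs x y
  | _, _, _ => False

/-- The equality `x = y` occurs in the formula (as an unordered pair). -/
def eqOccurs : SLR Rel ar Pr pa → ℕ → ℕ → Prop
  | .eq a b, x, y => (a = x ∧ b = y) ∨ (a = y ∧ b = x)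
  | .star φ ψ, x, y => φ.eqOccurs x y ∨ ψ.eqOccurs x y
  | .ex _ φ, x, y => φ.eqOccurs x y
  | _, _, _ => False

end SLR

/-- The nullary predicate atom `A()` (the arguments are irrelevant when `pa A = 0`). -/
def natom (A : Pr) : SLR Rel ar Pr pa := .pred A fun _ => 0

/-- Iterated separating conjunction: `starAll φ [χ1, …, χn] = χ1 * (χ2 * … * (χn * φ))`. -/
def starAll (φ : SLR Rel ar Pr pa) : List (SLR Rel ar Pr pa) → SLR Rel ar Pr pa
  | [] => φ
  | χ :: l => .star χ (starAll φ l)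

end Defs1

/-- A set of inductive definitions (SID): a finite set of rules `A(0,…,pa A - 1) ← φ`
where the free variables of `φ` are among the parameters `0, …, pa A - 1`. -/
structure SID (Rel : Type) (ar : Rel → ℕ) (Pr : Type) (pa : Pr → ℕ) where
  rules : Pr → Set (SLR Rel ar Pr pa)
  finite_rules : {p : Pr × SLR Rel ar Pr pa | p.2 ∈ rules p.1}.Finite
  wf : ∀ A, ∀ φ ∈ rules A, SLR.fv φ ⊆ {x | x < pa A}

section Defs2

variable {Rel : Type} {ar : Rel → ℕ} {V : Type} {Pr : Type} {pa : Pr → ℕ}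

/-- The empty structure predicate. -/
def EmpS (S : Str Rel ar V) : Prop := ∀ r, S.interp r = ∅

/-- The satisfaction relation of SLR, parameterized by a store and an SID.
A predicate atom `A(y₁,…,yₙ)` is satisfied iff the body of some rule for `A` is
satisfied under the store mapping the parameter `i` to the value of `yᵢ₊₁`. -/
inductive Sat (Δ : SID Rel ar Pr pa) :
    Str Rel ar V → (ℕ → V) → SLR Rel ar Pr pa → Prop where
  | emp {S : Str Rel ar V} {s : ℕ → V} : EmpS S → Sat Δ S s .emp
  | eq {S : Str Rel ar V} {s : ℕ → V} {x y : ℕ} :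
      EmpS S → s x = s y → Sat Δ S s (.eq x y)
  | ne {S : Str Rel ar V} {s : ℕ → V} {x y : ℕ} :
      EmpS S → s x ≠ s y → Sat Δ S s (.ne x y)
  | rel {S : Str Rel ar V} {s : ℕ → V} {r : Rel} {a : Fin (ar r) → ℕ} :
      S.interp r = {fun i => s (a i)} → (∀ r', r' ≠ r → S.interp r' = ∅) →
      Sat Δ S s (.rel r a)
  | pred {S : Str Rel ar V} {s : ℕ → V} {A : Pr} {a : Fin (pa A) → ℕ}
      {body : SLR Rel ar Pr pa} :
      body ∈ Δ.rules A →
      Sat Δ S (fun n => if h : n < pa A then s (a ⟨n, h⟩) else s n) body →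
      Sat Δ S s (.pred A a)
  | star {S1 S2 : Str Rel ar V} {s : ℕ → V} {φ ψ : SLR Rel ar Pr pa} :
      LocDisj S1 S2 → Sat Δ S1 s φ → Sat Δ S2 s ψ →
      Sat Δ (S1.comp S2) s (.star φ ψ)
  | ex {S : Str Rel ar V} {s : ℕ → V} {x : ℕ} {φ : SLR Rel ar Pr pa} (u : V) :
      Sat Δ S (Function.update s x u) φ → Sat Δ S s (.ex x φ)

/-- The set of `Δ`-models of a sentence (over universe `V`). -/
def SMod (Δ : SID Rel ar Pr pa) (φ : SLR Rel ar Pr pa) : Set (Str Rel ar V) :=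
  { S | ∃ s : ℕ → V, Sat Δ S s φ }

/-- `IsSubst f φ φ'` holds iff `φ'` is obtained from `φ` by the capture-avoiding
substitution of `f x` for each free variable `x`, the bound variables being renamed
to avoid clashes. -/
inductive IsSubst : (ℕ → ℕ) → SLR Rel ar Pr pa → SLR Rel ar Pr pa → Prop where
  | emp {f : ℕ → ℕ} : IsSubst f .emp .emp
  | eq {f : ℕ → ℕ} {x y : ℕ} : IsSubst f (.eq x y) (.eq (f x) (f y))
  | ne {f : ℕ → ℕ} {x y : ℕ} : IsSubst f (.ne x y) (.ne (f x) (f y))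
  | rel {f : ℕ → ℕ} {r : Rel} {a : Fin (ar r) → ℕ} :
      IsSubst f (.rel r a) (.rel r (f ∘ a))
  | pred {f : ℕ → ℕ} {A : Pr} {a : Fin (pa A) → ℕ} :
      IsSubst f (.pred A a) (.pred A (f ∘ a))
  | star {f : ℕ → ℕ} {φ ψ φ' ψ' : SLR Rel ar Pr pa} :
      IsSubst f φ φ' → IsSubst f ψ ψ' → IsSubst f (.star φ ψ) (.star φ' ψ')
  | ex {f : ℕ → ℕ} {x z : ℕ} {φ φ' : SLR Rel ar Pr pa} :
      (∀ y ∈ SLR.fv φ, y ≠ x → f y ≠ z) →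
      IsSubst (Function.update f x z) φ φ' →
      IsSubst f (.ex x φ) (.ex z φ')

/-- One unfolding step: replace one predicate atom `A(y₁,…,yₙ)` by the body of a rule
for `A`, with the parameters substituted by `y₁,…,yₙ` (bound variables renamed to
avoid clashes). -/
inductive Step (Δ : SID Rel ar Pr pa) : SLR Rel ar Pr pa → SLR Rel ar Pr pa → Prop where
  | unfold {A : Pr} {a : Fin (pa A) → ℕ} {body ψ : SLR Rel ar Pr pa} :
      body ∈ Δ.rules A →
      IsSubst (fun n => if h : n < pa A then a ⟨n, h⟩ else n) body ψ →
      Step Δ (.pred A a) ψ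
  | starL {φ φ' ψ : SLR Rel ar Pr pa} : Step Δ φ φ' → Step Δ (.star φ ψ) (.star φ' ψ)
  | starR {φ ψ ψ' : SLR Rel ar Pr pa} : Step Δ ψ ψ' → Step Δ (.star φ ψ) (.star φ ψ')
  | exC {x : ℕ} {φ φ' : SLR Rel ar Pr pa} : Step Δ φ φ' → Step Δ (.ex x φ) (.ex x φ')

/-- `Δ`-unfolding: the reflexive-transitive closure of unfolding steps. -/
def Unfolds (Δ : SID Rel ar Pr pa) : SLR Rel ar Pr pa → SLR Rel ar Pr pa → Prop :=
  Relation.ReflTransGen (Step Δ)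

/-- `x = y` is a logical consequence of `ψ`. -/
def EqConseq (Δ : SID Rel ar Pr pa) (ψ : SLR Rel ar Pr pa) (x y : ℕ) : Prop :=
  ∀ (S : Str Rel ar V) (s : ℕ → V), Sat Δ S s ψ → s x = s y

/-- A store is canonical for `ψ` iff it identifies only variables that are equated as a
logical consequence of `ψ`. -/
def CanonicalStore (Δ : SID Rel ar Pr pa) (s : ℕ → V) (ψ : SLR Rel ar Pr pa) : Prop :=
  ∀ x ∈ ψ.fv, ∀ y ∈ ψ.fv, s x = s y → EqConseq (V := V) Δ ψ x y

/-- `(S, d)` is a rich canonical `Δ`-model of `φ`: for some complete `Δ`-unfolding of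
`φ` into a well-named predicate-free formula `χ` (i.e. of the form `∃x⃗.ψ` with `ψ` qpf,
up to hoisting of quantifiers) and some store canonical for the matrix `ψ`, the
structure `S` satisfies `ψ` and `d` records the disequalities of `ψ` under the store. -/
def RichCanonical (Δ : SID Rel ar Pr pa) (φ : SLR Rel ar Pr pa)
    (S : Str Rel ar V) (d : V → V → Prop) : Prop :=
  ∃ χ : SLR Rel ar Pr pa, Unfolds Δ φ χ ∧ χ.PredFree ∧ χ.WellNamed ∧
    ∃ s : ℕ → V, CanonicalStore Δ s χ.matrix ∧ Sat Δ S s χ.matrix ∧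
      ∀ u v : V, d u v ↔ ∃ x y : ℕ, s x = u ∧ s y = v ∧ χ.matrix.neOccurs x y

/-- The set of canonical `Δ`-models of `φ`. -/
def Canonical (Δ : SID Rel ar Pr pa) (φ : SLR Rel ar Pr pa) : Set (Str Rel ar V) :=
  { S | ∃ d, RichCanonical Δ φ S d }

/-- `S1` is a substructure of `S2`: its interpretation consists exactly of the tuples of
`S2` all of whose elements belong to the support of `S1`. -/
def Substr (S1 S2 : Str Rel ar V) : Prop :=
  ∀ r, S1.interp r = { t ∈ S2.interp r | ∀ i, t i ∈ S1.supp }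

/-- Two elements touch iff they occur in a common tuple. -/
def Touching (S : Str Rel ar V) (u v : V) : Prop :=
  ∃ (r : Rel) (t : Fin (ar r) → V), t ∈ S.interp r ∧ (∃ i, t i = u) ∧ ∃ j, t j = v

/-- A structure is connected iff any two support elements are joined by a path of
pairwise overlapping tuples. -/
def ConnectedS (S : Str Rel ar V) : Prop :=
  ∀ u ∈ S.supp, ∀ v ∈ S.supp, Relation.ReflTransGen (Touching S) u v

/-- `S1` is a maximally connected substructure of `S2`. -/
def MaxConn (S1 S2 : Str Rel ar V) : Prop :=
  Substr S1 S2 ∧ ConnectedS S1 ∧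
    ∀ S1' : Str Rel ar V, Substr S1' S2 → ConnectedS S1' → Substr S1 S1' → S1 = S1'

/-- The set of maximally connected substructures of a structure. -/
def split (S : Str Rel ar V) : Set (Str Rel ar V) := { S' | MaxConn S' S }

/-- `split`, lifted to sets of structures. -/
def splitSet (𝒮 : Set (Str Rel ar V)) : Set (Str Rel ar V) := ⋃ S ∈ 𝒮, split S

/-- The smallest equivalence relation containing `R`. -/
def EqvOf (R : V → V → Prop) (a b : V) : Prop :=
  ∀ E : V → V → Prop, Equivalence E → (∀ x y, R x y → E x y) → E a b

/-- An equivalence relation is compatible with a structure iff any two distinct tuples of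
the interpretation of a relation symbol differ at some position modulo the relation. -/
def CompatibleE (S : Str Rel ar V) (E : V → V → Prop) : Prop :=
  ∀ r, ∀ t1 ∈ S.interp r, ∀ t2 ∈ S.interp r, t1 ≠ t2 → ∃ i, ¬ E (t1 i) (t2 i)

/-- The image of a structure under a map on elements. -/
def mapStr (h : V → V) (S : Str Rel ar V) : Str Rel ar V where
  interp r := (fun t => h ∘ t) '' S.interp r
  finite_interp r := (S.finite_interp r).image _
  finite_active := by
    refine S.finite_active.subset ?_
    intro r hr
    simp only [Set.mem_setOf_eq, ne_eq] at hr ⊢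
    intro h0
    exact hr (by rw [h0, Set.image_empty])

/-- `S'` is (a copy over `V` of) the quotient of `S` by the equivalence relation `E`. -/
def QuotBy (S : Str Rel ar V) (E : V → V → Prop) (S' : Str Rel ar V) : Prop :=
  ∃ h : V → V, (∀ u ∈ S.supp, ∀ v ∈ S.supp, (E u v ↔ h u = h v)) ∧ S' = mapStr h S

/-- `S'` is an isomorphic copy of `S` (over the same universe `V`). -/
def IsoCopy (S S' : Str Rel ar V) : Prop :=
  ∃ h : V → V, Set.InjOn h S.supp ∧ S' = mapStr h S

/-- A matching: a set of pairs such that distinct pairs share no element. -/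
def IsMatching (M : Set (V × V)) : Prop :=
  ∀ p ∈ M, ∀ q ∈ M, p ≠ q → ({p.1, p.2} ∩ {q.1, q.2} : Set V) = ∅

/-- The set of internal fusions of a structure: quotients by compatible equivalence
relations (up to isomorphism). -/
def IntFusion (S : Str Rel ar V) : Set (Str Rel ar V) :=
  { S' | ∃ E : V → V → Prop, Equivalence E ∧ CompatibleE S E ∧ QuotBy S E S' }

/-- Internal fusions of members of a set of structures. -/
def ifSet (𝒮 : Set (Str Rel ar V)) : Set (Str Rel ar V) := ⋃ S ∈ 𝒮, IntFusion S

/-- Internal fusions of a rich canonical model: quotients by compatible equivalence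
relations that do not violate the disequality relation `d`. -/
def SIntFusion (S : Str Rel ar V) (d : V → V → Prop) : Set (Str Rel ar V) :=
  { S' | ∃ E : V → V → Prop, Equivalence E ∧ CompatibleE S E ∧
      (∀ u v, d u v → ¬ E u v) ∧ QuotBy S E S' }

/-- External fusions of two structures: quotients of the composition of disjoint
isomorphic copies by the smallest equivalence relation containing a nonempty matching
between supports that is compatible with the composition. -/
def ExtFusion (S1 S2 : Str Rel ar V) : Set (Str Rel ar V) :=
  { S' | ∃ (S1' S2' : Str Rel ar V) (M : Set (V × V)),
      IsoCopy S1 S1' ∧ IsoCopy S2 S2' ∧ S1'.supp ∩ S2'.supp = ∅ ∧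
      M.Nonempty ∧ IsMatching M ∧ (∀ p ∈ M, p.1 ∈ S1'.supp ∧ p.2 ∈ S2'.supp) ∧
      CompatibleE (S1'.comp S2') (EqvOf fun a b => (a, b) ∈ M) ∧
      QuotBy (S1'.comp S2') (EqvOf fun a b => (a, b) ∈ M) S' }

/-- Single-pair external fusions: external fusions whose matching is a single pair. -/
def ExtFusion1 (S1 S2 : Str Rel ar V) : Set (Str Rel ar V) :=
  { S' | ∃ (S1' S2' : Str Rel ar V) (M : Set (V × V)),
      IsoCopy S1 S1' ∧ IsoCopy S2 S2' ∧ S1'.supp ∩ S2'.supp = ∅ ∧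
      (∃ p : V × V, M = {p}) ∧ IsMatching M ∧
      (∀ p ∈ M, p.1 ∈ S1'.supp ∧ p.2 ∈ S2'.supp) ∧
      CompatibleE (S1'.comp S2') (EqvOf fun a b => (a, b) ∈ M) ∧
      QuotBy (S1'.comp S2') (EqvOf fun a b => (a, b) ∈ M) S' }

/-- Closure of a set of structures under external fusions (structures being identified
up to isomorphism). -/
inductive efStar (𝒮 : Set (Str Rel ar V)) : Str Rel ar V → Prop where
  | base {S : Str Rel ar V} : S ∈ 𝒮 → efStar 𝒮 S
  | iso {S S' : Str Rel ar V} : efStar 𝒮 S → IsoCopy S S' → efStar 𝒮 S'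
  | fuse {S1 S2 S : Str Rel ar V} :
      efStar 𝒮 S1 → efStar 𝒮 S2 → S ∈ ExtFusion S1 S2 → efStar 𝒮 S

def efStarSet (𝒮 : Set (Str Rel ar V)) : Set (Str Rel ar V) := { S | efStar 𝒮 S }

/-- Closure of a set of structures under single-pair external fusions. -/
inductive ef1Star (𝒮 : Set (Str Rel ar V)) : Str Rel ar V → Prop where
  | base {S : Str Rel ar V} : S ∈ 𝒮 → ef1Star 𝒮 S
  | iso {S S' : Str Rel ar V} : ef1Star 𝒮 S → IsoCopy S S' → ef1Star 𝒮 S'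
  | fuse {S1 S2 S : Str Rel ar V} :
      ef1Star 𝒮 S1 → ef1Star 𝒮 S2 → S ∈ ExtFusion1 S1 S2 → ef1Star 𝒮 S

def ef1StarSet (𝒮 : Set (Str Rel ar V)) : Set (Str Rel ar V) := { S | ef1Star 𝒮 S }

/-- Closure of a set of structures under both internal and external fusions. -/
inductive iefStar (𝒮 : Set (Str Rel ar V)) : Str Rel ar V → Prop where
  | base {S : Str Rel ar V} : S ∈ 𝒮 → iefStar 𝒮 S
  | iso {S S' : Str Rel ar V} : iefStar 𝒮 S → IsoCopy S S' → iefStar 𝒮 S'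
  | fuse {S1 S2 S : Str Rel ar V} :
      iefStar 𝒮 S1 → iefStar 𝒮 S2 → S ∈ ExtFusion S1 S2 → iefStar 𝒮 S
  | intf {S1 S : Str Rel ar V} : iefStar 𝒮 S1 → S ∈ IntFusion S1 → iefStar 𝒮 S

def iefStarSet (𝒮 : Set (Str Rel ar V)) : Set (Str Rel ar V) := { S | iefStar 𝒮 S }

/-- The color of an element: the set of relation symbols whose interpretation contains
the constant tuple at this element. -/
def color (S : Str Rel ar V) (u : V) : Set Rel :=
  { r : Rel | (fun _ => u) ∈ S.interp r }

/-- The multiplicity of a color in the multiset color abstraction of a structure. -/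
noncomputable def colorMult (S : Str Rel ar V) (C : Set Rel) : ℕ :=
  {u ∈ S.supp | color S u = C}.ncard

/-- The `k`-multiset color abstraction of a structure: the sub-multisets of cardinality
at most `k` of the multiset of colors of its support elements. -/
noncomputable def MkOf (k : ℕ) (S : Str Rel ar V) : Set (Multiset (Set Rel)) :=
  { M | Multiset.card M ≤ k ∧
      ∀ C : Set Rel, @Multiset.count _ (Classical.decEq _) C M ≤ colorMult S C }

/-- The `k`-multiset color abstraction, lifted to sets of structures. -/
noncomputable def MkSet (k : ℕ) (𝒮 : Set (Str Rel ar V)) : Set (Multiset (Set Rel)) :=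
  ⋃ S ∈ 𝒮, MkOf k S

/-- A set of structures conforms to an RGB color scheme iff (1) in any member, if some
support element has a red color then all other support elements have blue colors, and
(2) in any external fusion of members, every green color occurs at most twice. -/
def Conforms (𝒮 : Set (Str Rel ar V)) (P : RGB Rel) : Prop :=
  (∀ S ∈ 𝒮, ∀ u ∈ S.supp, color S u ∈ P.red →
      ∀ v ∈ S.supp, v ≠ u → color S v ∈ P.blue) ∧
  (∀ S ∈ efStarSet 𝒮, ∀ C ∈ P.green, colorMult S C ≤ 2)

/-- Type `R` structures: only blue and red colors, with exactly one red element. -/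
def TypeR (P : RGB Rel) (S : Str Rel ar V) : Prop :=
  (∀ u ∈ S.supp, color S u ∈ P.blue ∨ color S u ∈ P.red) ∧
  {u ∈ S.supp | color S u ∈ P.red}.ncard = 1

/-- Type `G` structures: only blue and green colors, with at least one green element. -/
def TypeG (P : RGB Rel) (S : Str Rel ar V) : Prop :=
  (∀ u ∈ S.supp, color S u ∈ P.blue ∨ color S u ∈ P.green) ∧
  {u ∈ S.supp | color S u ∈ P.green}.Nonempty

/-- Type `B` structures: only blue colors. -/
def TypeB (P : RGB Rel) (S : Str Rel ar V) : Prop :=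
  ∀ u ∈ S.supp, color S u ∈ P.blue

namespace SID

/-- The set of predicate symbols occurring in an SID. -/
def predsOf (Δ : SID Rel ar Pr pa) : Set Pr :=
  {A | Δ.rules A ≠ ∅} ∪ ⋃ A, ⋃ φ ∈ Δ.rules A, SLR.preds φ

/-- The set of relation symbols occurring in an SID. -/
def relsOf (Δ : SID Rel ar Pr pa) : Set Rel :=
  ⋃ A, ⋃ φ ∈ Δ.rules A, SLR.rels φ

/-- The number of predicate symbols occurring in an SID. -/
noncomputable def Pcount (Δ : SID Rel ar Pr pa) : ℕ := Δ.predsOf.ncard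

/-- The number of relation symbols occurring in an SID. -/
noncomputable def Rcount (Δ : SID Rel ar Pr pa) : ℕ := Δ.relsOf.ncard

/-- The maximum number of variables (free or existentially quantified) occurring in a
rule of the SID. -/
noncomputable def maxvar (Δ : SID Rel ar Pr pa) : ℕ :=
  sSup { n | ∃ A, ∃ φ ∈ Δ.rules A, n = ({x | x < pa A} ∪ SLR.vars φ).ncard }

/-- The maximum number of predicate atoms occurring in a rule of the SID. -/
noncomputable def maxpredatoms (Δ : SID Rel ar Pr pa) : ℕ :=
  sSup { n | ∃ A, ∃ φ ∈ Δ.rules A, n = SLR.npred φ }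

/-- The maximum number of relation atoms occurring in a rule of the SID. -/
noncomputable def maxrelatoms (Δ : SID Rel ar Pr pa) : ℕ :=
  sSup { n | ∃ A, ∃ φ ∈ Δ.rules A, n = SLR.nrel φ }

/-- The maximum arity of a relation symbol occurring in the SID. -/
noncomputable def maxrelarity (Δ : SID Rel ar Pr pa) : ℕ :=
  sSup { n | ∃ r ∈ Δ.relsOf, n = ar r }

/-- The maximum arity of a predicate symbol occurring in the SID. -/
noncomputable def maxpredarity (Δ : SID Rel ar Pr pa) : ℕ :=
  sSup { n | ∃ A ∈ Δ.predsOf, n = pa A }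

/-- An SID is equality-free iff all its rules are equality-free. -/
def EqFree (Δ : SID Rel ar Pr pa) : Prop :=
  ∀ A, ∀ φ ∈ Δ.rules A, SLR.EqFreeF φ

end SID

/-- An SID is all-satisfiable for a nullary predicate `A` iff every predicate-free
outcome of a complete unfolding of `A` is satisfiable. -/
def AllSat (Δ : SID Rel ar Pr pa) (A : Pr) : Prop :=
  ∀ χ : SLR Rel ar Pr pa, Unfolds Δ (natom A) χ → χ.PredFree →
    ∃ (S : Str Rel ar V) (s : ℕ → V), Sat Δ S s χ

/-- An SID is expandable for a nullary predicate `A`: any finite family of pairwise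
disjoint canonical models embeds, as a substructure, into a rich canonical model, in a
way that neither disequalities nor overlapping tuples connect two distinct members. -/
def Expandable (Δ : SID Rel ar Pr pa) (A : Pr) : Prop :=
  ∀ (n : ℕ) (Ss : Fin n → Str Rel ar V),
    (∀ i, Ss i ∈ Canonical (V := V) Δ (natom A)) →
    (∀ i j, i ≠ j → (Ss i).supp ∩ (Ss j).supp = ∅) →
    ∃ (S : Str Rel ar V) (d : V → V → Prop),
      RichCanonical Δ (natom A) S d ∧
      Substr (bigComp Ss) S ∧
      (∀ i j : Fin n, i < j → ∀ u ∈ (Ss i).supp, ∀ v ∈ (Ss j).supp, ¬ d u v) ∧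
      ¬ ∃ (r : Rel) (t1 t2 : Fin (ar r) → V) (i j : Fin n),
          t1 ∈ S.interp r ∧ t2 ∈ S.interp r ∧ i < j ∧
          (∃ k, t1 k ∈ (Ss i).supp) ∧ (∃ k, t2 k ∈ (Ss j).supp) ∧ ∃ k l, t1 k = t2 l

/-- The set of structures obtained by internal fusion of rich canonical `Δ`-models. -/
def sifSet (Δ : SID Rel ar Pr pa) (φ : SLR Rel ar Pr pa) : Set (Str Rel ar V) :=
  { S' | ∃ (S : Str Rel ar V) (d : V → V → Prop),
      RichCanonical Δ φ S d ∧ S' ∈ SIntFusion S d }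

end Defs2

end SLRTW

namespace SLRTW

section Aux

variable {Rel : Type} {ar : Rel → ℕ} {V : Type} {Pr : Type} {pa : Pr → ℕ}
  {Δ : SID Rel ar Pr pa}

lemma Str.ext' {S1 S2 : Str Rel ar V} (h : ∀ r, S1.interp r = S2.interp r) :
    S1 = S2 := by
  cases S1; cases S2
  simp only [Str.mk.injEq]
  exact funext h

lemma EmpS.comp_eq {S1 S2 : Str Rel ar V} (h : EmpS S1) : S1.comp S2 = S2 := by
  apply Str.ext'
  intro r
  simp [Str.comp, h r]

lemma EmpS.supp_eq {S : Str Rel ar V} (h : EmpS S) : S.supp = ∅ := by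
  ext u
  simp only [Str.supp, Set.mem_setOf_eq, Set.mem_empty_iff_false, iff_false]
  rintro ⟨r, t, ht, -⟩
  rw [h r] at ht
  exact ht

lemma supp_finite (S : Str Rel ar V) : S.supp.Finite := by
  have : S.supp ⊆ ⋃ r ∈ {r : Rel | S.interp r ≠ ∅},
      ⋃ t ∈ S.interp r, Set.range t := by
    rintro u ⟨r, t, ht, i, rfl⟩
    exact Set.mem_biUnion (Set.nonempty_iff_ne_empty.mp ⟨t, ht⟩) (Set.mem_biUnion ht ⟨i, rfl⟩)
  refine Set.Finite.subset ?_ this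
  exact S.finite_active.biUnion fun r _ =>
    (S.finite_interp r).biUnion fun t _ => Set.finite_range t

lemma fv_finite (χ : SLR Rel ar Pr pa) : χ.fv.Finite := by
  induction χ with
  | emp => exact Set.finite_empty
  | eq x y => exact (Set.finite_singleton y).insert x
  | ne x y => exact (Set.finite_singleton y).insert x
  | rel r a => exact Set.finite_range a
  | pred A a => exact Set.finite_range a
  | star φ ψ ih1 ih2 => exact ih1.union ih2
  | ex x φ ih => exact ih.diff

lemma eqOccurs_symm {χ : SLR Rel ar Pr pa} {y z : ℕ} (h : χ.eqOccurs y z) :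
    χ.eqOccurs z y := by
  induction χ with
  | eq a b => rcases h with ⟨rfl, rfl⟩ | ⟨rfl, rfl⟩
              · exact Or.inr ⟨rfl, rfl⟩
              · exact Or.inl ⟨rfl, rfl⟩
  | star φ ψ ih1 ih2 => exact h.imp ih1 ih2
  | ex a φ ih => exact ih h
  | _ => exact h.elim

lemma eqOccurs_sound {χ : SLR Rel ar Pr pa} (hχ : χ.QPF) {S : Str Rel ar V}
    {s : ℕ → V} (h : Sat Δ S s χ) {y z : ℕ} (ho : χ.eqOccurs y z) : s y = s z := by
  induction χ generalizing S with
  | eq a b =>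
    cases h with
    | eq _ hab =>
      rcases ho with ⟨rfl, rfl⟩ | ⟨rfl, rfl⟩
      · exact hab
      · exact hab.symm
  | star φ ψ ih1 ih2 =>
    cases h with
    | star _ h1 h2 => exact ho.elim (ih1 hχ.1 h1) (ih2 hχ.2 h2)
  | ex a φ ih => exact hχ.elim
  | pred A a => exact hχ.elim
  | _ => exact ho.elim

lemma eqvGen_sound {χ : SLR Rel ar Pr pa} (hχ : χ.QPF) {S : Str Rel ar V}
    {s : ℕ → V} (h : Sat Δ S s χ) {y z : ℕ}
    (ho : Relation.EqvGen χ.eqOccurs y z) : s y = s z := by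
  induction ho with
  | rel a b hab => exact eqOccurs_sound hχ h hab
  | refl a => rfl
  | symm a b _ ih => exact ih.symm
  | trans a b c _ _ ih1 ih2 => exact ih1.trans ih2

/-- Occurrence of a relation atom in a formula. -/
def relOcc : SLR Rel ar Pr pa → (Σ r : Rel, Fin (ar r) → ℕ) → Prop
  | .rel r a, p => p = ⟨r, a⟩
  | .star φ ψ, p => relOcc φ p ∨ relOcc ψ p
  | _, _ => False

lemma relOcc_fv {χ : SLR Rel ar Pr pa} {r : Rel} {a : Fin (ar r) → ℕ}
    (h : relOcc χ ⟨r, a⟩) : Set.range a ⊆ χ.fv := by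
  induction χ with
  | rel r' a' =>
    obtain ⟨rfl, ha⟩ := Sigma.mk.inj_iff.mp h
    rw [eq_of_heq ha]
    exact subset_rfl
  | star φ ψ ih1 ih2 =>
    rcases h with h | h
    · exact (ih1 h).trans Set.subset_union_left
    · exact (ih2 h).trans Set.subset_union_right
  | _ => exact h.elim

lemma relOcc_mem {χ : SLR Rel ar Pr pa} (hχ : χ.QPF) {S : Str Rel ar V}
    {s : ℕ → V} (h : Sat Δ S s χ) {r : Rel} {a : Fin (ar r) → ℕ}
    (ho : relOcc χ ⟨r, a⟩) : (fun i => s (a i)) ∈ S.interp r := by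
  induction χ generalizing S with
  | rel r' a' =>
    obtain ⟨rfl, ha⟩ := Sigma.mk.inj_iff.mp ho
    rw [eq_of_heq ha]
    cases h with
    | rel hr _ => rw [hr]; rfl
  | star φ ψ ih1 ih2 =>
    cases h with
    | star _ h1 h2 =>
      rcases ho with ho | ho
      · exact Or.inl (ih1 hχ.1 h1 ho)
      · exact Or.inr (ih2 hχ.2 h2 ho)
  | pred A a' => exact hχ.elim
  | ex a' φ => exact hχ.elim
  | _ => exact ho.elim

lemma mem_relOcc {χ : SLR Rel ar Pr pa} (hχ : χ.QPF) {S : Str Rel ar V}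
    {s : ℕ → V} (h : Sat Δ S s χ) {r : Rel} {t : Fin (ar r) → V}
    (ht : t ∈ S.interp r) : ∃ a, relOcc χ ⟨r, a⟩ ∧ t = fun i => s (a i) := by
  induction χ generalizing S with
  | rel r' a' =>
    cases h with
    | rel hr hother =>
      by_cases hrr : r = r'
      · subst hrr
        rw [hr] at ht
        exact ⟨a', rfl, ht⟩
      · rw [hother r hrr] at ht
        exact ht.elim
  | star φ ψ ih1 ih2 =>
    cases h with
    | star _ h1 h2 =>
      rcases ht with ht | ht
      · obtain ⟨a, ha, hta⟩ := ih1 hχ.1 h1 ht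
        exact ⟨a, Or.inl ha, hta⟩
      · obtain ⟨a, ha, hta⟩ := ih2 hχ.2 h2 ht
        exact ⟨a, Or.inr ha, hta⟩
  | pred A a' => exact hχ.elim
  | ex a' φ => exact hχ.elim
  | emp =>
    cases h with
    | emp he => rw [he r] at ht; exact ht.elim
  | eq a b =>
    cases h with
    | eq he _ => rw [he r] at ht; exact ht.elim
  | ne a b =>
    cases h with
    | ne he _ => rw [he r] at ht; exact ht.elim

/-- The structure whose only tuple is `t`, in relation `r`. -/
def singStr (r : Rel) (t : Fin (ar r) → V) : Str Rel ar V where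
  interp ρ := {u | ∃ e : ρ = r, u = fun i => t (e ▸ i)}
  finite_interp ρ := by
    apply Set.Subsingleton.finite
    rintro u ⟨e, rfl⟩ v ⟨e', rfl⟩
    rfl
  finite_active := by
    refine (Set.finite_singleton r).subset ?_
    rintro ρ hρ
    simp only [Set.mem_setOf_eq, ne_eq] at hρ
    obtain ⟨u, e, -⟩ := Set.nonempty_iff_ne_empty.mpr hρ
    exact e

lemma singStr_interp_self (r : Rel) (t : Fin (ar r) → V) :
    (singStr r t).interp r = {t} := by
  ext u
  constructor
  · rintro ⟨e, rfl⟩; rfl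
  · rintro rfl; exact ⟨rfl, rfl⟩

lemma singStr_interp_ne (r : Rel) (t : Fin (ar r) → V) {ρ : Rel} (h : ρ ≠ r) :
    (singStr r t).interp ρ = ∅ := by
  ext u
  simp only [singStr, Set.mem_setOf_eq, Set.mem_empty_iff_false, iff_false]
  rintro ⟨e, -⟩
  exact h e

lemma sat_singStr {r : Rel} {a : Fin (ar r) → ℕ} (s : ℕ → V) :
    Sat Δ (singStr r (fun i => s (a i))) s (.rel r a) :=
  Sat.rel (singStr_interp_self r _) (fun _ h => singStr_interp_ne r _ h)

lemma singStr_supp (r : Rel) (t : Fin (ar r) → V) :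
    (singStr r t).supp ⊆ Set.range t := by
  rintro u ⟨ρ, t', ht', i, rfl⟩
  by_cases h : ρ = r
  · subst h
    rw [singStr_interp_self] at ht'
    subst ht'
    exact ⟨i, rfl⟩
  · rw [singStr_interp_ne r t h] at ht'
    exact ht'.elim

lemma mapStr_interp (h : V → V) (S : Str Rel ar V) (r : Rel) :
    (mapStr h S).interp r = (fun t => h ∘ t) '' S.interp r := rfl

/-- The key transfer lemma: a model of a qpf formula under a store `s` can be
"pulled back" along a map `h` to a model under the store `s'`. -/
lemma transfer {χ : SLR Rel ar Pr pa} (hχ : χ.QPF) {S : Str Rel ar V} {s : ℕ → V}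
    (hSat : Sat Δ S s χ) (h : V → V) (s' : ℕ → V)
    (hup : ∀ y ∈ χ.fv, h (s' y) = s y)
    (heq : ∀ y z, χ.eqOccurs y z → s' y = s' z) :
    ∃ S'' : Str Rel ar V, Sat Δ S'' s' χ ∧ S = mapStr h S'' ∧
      ∀ r, Set.InjOn (fun t => h ∘ t) (S''.interp r) := by
  induction χ generalizing S with
  | emp =>
    cases hSat with
    | emp he =>
      refine ⟨S, Sat.emp he, Str.ext' fun r => ?_, fun r => ?_⟩
      · rw [mapStr_interp, he r, Set.image_empty]
      · rw [he r]; exact Set.injOn_empty _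
  | eq a b =>
    cases hSat with
    | eq he hab =>
      refine ⟨S, Sat.eq he (heq a b (Or.inl ⟨rfl, rfl⟩)), Str.ext' fun r => ?_,
        fun r => ?_⟩
      · rw [mapStr_interp, he r, Set.image_empty]
      · rw [he r]; exact Set.injOn_empty _
  | ne a b =>
    cases hSat with
    | ne he hab =>
      refine ⟨S, Sat.ne he fun hc => hab ?_, Str.ext' fun r => ?_, fun r => ?_⟩
      · have h1 := hup a (by simp [SLR.fv])
        have h2 := hup b (by simp [SLR.fv])
        rw [← h1, ← h2, hc]
      · rw [mapStr_interp, he r, Set.image_empty]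
      · rw [he r]; exact Set.injOn_empty _
  | rel r' a' =>
    cases hSat with
    | rel hr hother =>
      refine ⟨singStr r' (fun i => s' (a' i)), sat_singStr s', Str.ext' fun ρ => ?_,
        fun ρ => ?_⟩
      · by_cases hρ : ρ = r'
        · subst hρ
          rw [mapStr_interp, singStr_interp_self, hr, Set.image_singleton]
          congr 1
          funext i
          exact (hup (a' i) ⟨i, rfl⟩).symm
        · rw [mapStr_interp, singStr_interp_ne _ _ hρ, Set.image_empty, hother ρ hρ]
      · by_cases hρ : ρ = r'
        · subst hρ
          rw [singStr_interp_self]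
          exact Set.injOn_singleton _ _
        · rw [singStr_interp_ne _ _ hρ]
          exact Set.injOn_empty _
  | star φ ψ ih1 ih2 =>
    cases hSat with
    | star hd h1 h2 =>
      obtain ⟨S1, hS1, rfl, hinj1⟩ := ih1 hχ.1 h1
        (fun y hy => hup y (Or.inl hy)) (fun y z hyz => heq y z (Or.inl hyz))
      obtain ⟨S2, hS2, rfl, hinj2⟩ := ih2 hχ.2 h2
        (fun y hy => hup y (Or.inr hy)) (fun y z hyz => heq y z (Or.inr hyz))
      have hd' : LocDisj S1 S2 := by
        intro r
        ext t
        simp only [Set.mem_inter_iff, Set.mem_empty_iff_false, iff_false, not_and]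
        intro ht1 ht2
        have : (h ∘ t) ∈ (mapStr h S1).interp r ∩ (mapStr h S2).interp r :=
          ⟨⟨t, ht1, rfl⟩, ⟨t, ht2, rfl⟩⟩
        rw [hd r] at this
        exact this
      refine ⟨S1.comp S2, Sat.star hd' hS1 hS2, Str.ext' fun r => ?_, fun r => ?_⟩
      · show (mapStr h S1).interp r ∪ (mapStr h S2).interp r = _
        rw [mapStr_interp, mapStr_interp, mapStr_interp]
        exact (Set.image_union _ _ _).symm
      · rintro t1 (ht1 | ht1) t2 (ht2 | ht2) hteq
        · exact hinj1 r ht1 ht2 hteq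
        · exfalso
          have : (h ∘ t1) ∈ (mapStr h S1).interp r ∩ (mapStr h S2).interp r :=
            ⟨⟨t1, ht1, rfl⟩, ⟨t2, ht2, hteq.symm⟩⟩
          rw [hd r] at this
          exact this
        · exfalso
          have : (h ∘ t2) ∈ (mapStr h S1).interp r ∩ (mapStr h S2).interp r :=
            ⟨⟨t2, ht2, rfl⟩, ⟨t1, ht1, hteq⟩⟩
          rw [hd r] at this
          exact this
        · exact hinj2 r ht1 ht2 hteq
  | pred A a' => exact hχ.elim
  | ex a' φ => exact hχ.elim

/-- The empty structure. -/
def empStr : Str Rel ar V where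
  interp _ := ∅
  finite_interp _ := Set.finite_empty
  finite_active := by simp

lemma empStr_emp : EmpS (empStr : Str Rel ar V) := fun _ => rfl

lemma starAll_elim {φ : SLR Rel ar Pr pa} {l : List (SLR Rel ar Pr pa)}
    {S : Str Rel ar V} {s : ℕ → V}
    (hl : ∀ χ ∈ l, (∃ a b, χ = SLR.eq a b) ∨ ∃ a b, χ = SLR.ne a b)
    (h : Sat Δ S s (starAll φ l)) :
    Sat Δ S s φ ∧ ∀ a b, (SLR.ne a b : SLR Rel ar Pr pa) ∈ l → s a ≠ s b := by
  induction l generalizing S with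
  | nil => exact ⟨h, by simp⟩
  | cons χ l ih =>
    rw [starAll] at h
    cases h with
    | star hd h1 h2 =>
      obtain ⟨hφ, hne⟩ := ih (fun χ' hχ' => hl χ' (List.mem_cons_of_mem _ hχ')) h2
      rcases hl χ (List.mem_cons_self) with ⟨a, b, rfl⟩ | ⟨a, b, rfl⟩
      · cases h1 with
        | eq he hab =>
          rw [he.comp_eq]
          refine ⟨hφ, fun a' b' hmem => ?_⟩
          rcases List.mem_cons.mp hmem with heqc | hmem
          · cases heqc
          · exact hne a' b' hmem
      · cases h1 with
        | ne he hab =>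
          rw [he.comp_eq]
          refine ⟨hφ, fun a' b' hmem => ?_⟩
          rcases List.mem_cons.mp hmem with heqc | hmem
          · cases heqc; exact hab
          · exact hne a' b' hmem

lemma starAll_intro {φ : SLR Rel ar Pr pa} {l : List (SLR Rel ar Pr pa)}
    {S : Str Rel ar V} {s : ℕ → V} (h : Sat Δ S s φ)
    (hl : ∀ χ ∈ l, ∃ a b, χ = SLR.ne a b ∧ s a ≠ s b) :
    Sat Δ S s (starAll φ l) := by
  induction l with
  | nil => exact h
  | cons χ l ih =>
    obtain ⟨a, b, rfl, hab⟩ := hl χ (List.mem_cons_self)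
    have hrest := ih (fun χ' hχ' => hl χ' (List.mem_cons_of_mem _ hχ'))
    have hsat : Sat Δ ((empStr : Str Rel ar V).comp S) s
        (.star (.ne a b) (starAll φ l)) :=
      Sat.star (fun r => Set.empty_inter _) (Sat.ne empStr_emp hab) hrest
    rwa [empStr_emp.comp_eq] at hsat

lemma supp_sub_fv {χ : SLR Rel ar Pr pa} (hχ : χ.QPF) {S : Str Rel ar V}
    {s : ℕ → V} (h : Sat Δ S s χ) : S.supp ⊆ s '' χ.fv := by
  induction χ generalizing S with
  | emp => cases h with | emp he => rw [he.supp_eq]; exact Set.empty_subset _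
  | eq a b => cases h with | eq he _ => rw [he.supp_eq]; exact Set.empty_subset _
  | ne a b => cases h with | ne he _ => rw [he.supp_eq]; exact Set.empty_subset _
  | rel r a =>
    cases h with
    | rel hr hother =>
      rintro u ⟨ρ, t, ht, i, rfl⟩
      by_cases hρ : ρ = r
      · subst hρ
        rw [hr] at ht
        rw [ht]
        exact ⟨a i, ⟨i, rfl⟩, rfl⟩
      · rw [hother ρ hρ] at ht
        exact ht.elim
  | star φ ψ ih1 ih2 =>
    cases h with
    | star hd h1 h2 =>
      rintro u ⟨ρ, t, ht, i, rfl⟩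
      rcases ht with ht | ht
      · exact Set.image_mono Set.subset_union_left (ih1 hχ.1 h1 ⟨ρ, t, ht, i, rfl⟩)
      · exact Set.image_mono Set.subset_union_right (ih2 hχ.2 h2 ⟨ρ, t, ht, i, rfl⟩)
  | pred A a => exact hχ.elim
  | ex a φ => exact hχ.elim

/-! ### Treewidth lemmas -/

lemma induce_connected_of_subsingleton {W : Type} [Subsingleton W]
    (G : SimpleGraph W) (s : Set W) (hne : s.Nonempty) :
    (SimpleGraph.induce s G).Connected := by
  obtain ⟨w, hw⟩ := hne
  haveI : Nonempty s := ⟨⟨w, hw⟩⟩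
  exact ⟨fun a b => Subsingleton.elim a b ▸ SimpleGraph.Reachable.refl a⟩

/-- The trivial one-node tree decomposition. -/
noncomputable def trivDecomp (S : Str Rel ar V) : TreeDecomp S where
  ι := PUnit
  instFin := inferInstance
  G := ⊥
  isTree := ⟨⟨fun a b => Subsingleton.elim a b ▸ SimpleGraph.Reachable.refl a⟩,
    SimpleGraph.isAcyclic_bot⟩
  bag _ := (supp_finite S).toFinset
  bag_cover r t ht :=
    ⟨PUnit.unit, fun i => (supp_finite S).mem_toFinset.mpr ⟨r, t, ht, i, rfl⟩⟩
  bag_conn u hu :=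
    induce_connected_of_subsingleton _ _
      ⟨PUnit.unit, (supp_finite S).mem_toFinset.mpr hu⟩

lemma tw_le_width {S : Str Rel ar V} (T : TreeDecomp S) : tw S ≤ T.width :=
  Nat.sInf_le ⟨T, rfl⟩

lemma tw_spec (S : Str Rel ar V) : ∃ T : TreeDecomp S, T.width = tw S := by
  have hne : {w | ∃ T : TreeDecomp S, T.width = w}.Nonempty :=
    ⟨(trivDecomp S).width, trivDecomp S, rfl⟩
  exact Nat.sInf_mem hne

lemma supp_mono {S1 S2 : Str Rel ar V} (h : ∀ r, S1.interp r ⊆ S2.interp r) :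
    S1.supp ⊆ S2.supp := by
  rintro u ⟨r, t, ht, i, rfl⟩
  exact ⟨r, t, h r ht, i, rfl⟩

lemma tw_mono {S1 S2 : Str Rel ar V} (h : ∀ r, S1.interp r ⊆ S2.interp r) :
    tw S1 ≤ tw S2 := by
  obtain ⟨T, hT⟩ := tw_spec S2
  refine le_trans (tw_le_width (S := S1)
    { ι := T.ι, instFin := T.instFin, G := T.G, isTree := T.isTree, bag := T.bag
      bag_cover := fun r t ht => T.bag_cover r t (h r ht)
      bag_conn := fun u hu => T.bag_conn u (supp_mono h hu) }) ?_
  exact hT.le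

lemma width_aux {ι : Type} [Fintype ι] (f g : ι → ℕ) (c : ℕ) (h : ∀ n, g n ≤ f n + c) :
    (Finset.univ.sup g) - 1 ≤ (Finset.univ.sup f - 1) + c := by
  have hs : Finset.univ.sup g ≤ Finset.univ.sup f + c :=
    Finset.sup_le fun n _ =>
      (h n).trans (add_le_add_left (Finset.le_sup (Finset.mem_univ n)) c)
  omega

lemma induce_univ_connected {W : Type} (G : SimpleGraph W) (hG : G.Connected)
    (s : Set W) (hs : s = Set.univ) : (SimpleGraph.induce s G).Connected := by
  subst hs
  exact (SimpleGraph.induceUnivIso G).connected_iff.mpr hG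

lemma tw_comp_le (S1 S2 : Str Rel ar V) :
    tw (S1.comp S2) ≤ tw S1 + S2.supp.ncard := by
  classical
  obtain ⟨T, hT⟩ := tw_spec S1
  set K : Finset V := (supp_finite S2).toFinset with hK
  have hKmem : ∀ v, v ∈ K ↔ v ∈ S2.supp := fun v => (supp_finite S2).mem_toFinset
  have hKcard : K.card = S2.supp.ncard := by
    rw [hK, ← Set.ncard_eq_toFinset_card _ (supp_finite S2)]
  refine le_trans (tw_le_width (S := S1.comp S2)
    { ι := T.ι, instFin := T.instFin, G := T.G, isTree := T.isTree
      bag := fun n => T.bag n ∪ K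
      bag_cover := ?_
      bag_conn := ?_ }) ?_
  · rintro r t (ht | ht)
    · obtain ⟨n, hn⟩ := T.bag_cover r t ht
      exact ⟨n, fun i => Finset.mem_union_left _ (hn i)⟩
    · obtain ⟨n⟩ := T.isTree.1.nonempty
      exact ⟨n, fun i => Finset.mem_union_right _ ((hKmem _).mpr ⟨r, t, ht, i, rfl⟩)⟩
  · intro u hu
    by_cases huK : u ∈ K
    · refine induce_univ_connected _ T.isTree.1 _ ?_
      ext n
      simp only [Set.mem_setOf_eq, Finset.mem_union, Set.mem_univ, iff_true]
      exact Or.inr huK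
    · obtain ⟨r, t, ht, i, rfl⟩ := hu
      rcases ht with ht | ht
      · have hset : {n : T.ι | t i ∈ T.bag n ∪ K} = {n : T.ι | t i ∈ T.bag n} := by
          ext n
          simp only [Set.mem_setOf_eq, Finset.mem_union]
          exact ⟨fun h0 => h0.resolve_right huK, Or.inl⟩
        rw [hset]
        exact T.bag_conn _ ⟨r, t, ht, i, rfl⟩
      · exact absurd ((hKmem _).mpr ⟨r, t, ht, i, rfl⟩) huK
  · show (Finset.univ.sup fun n : T.ι => (T.bag n ∪ K).card) - 1 ≤ _
    rw [← hT, ← hKcard]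
    exact width_aux _ _ K.card fun n => Finset.card_union_le _ _

lemma tw_mapStr_le {u : V} (h : V → V) (hid : ∀ w, w ≠ u → h w = w)
    (S : Str Rel ar V) : tw (mapStr h S) ≤ tw S + 1 := by
  classical
  obtain ⟨T, hT⟩ := tw_spec S
  refine le_trans (tw_le_width (S := mapStr h S)
    { ι := T.ι, instFin := T.instFin, G := T.G, isTree := T.isTree
      bag := fun n => (T.bag n).image h ∪ {h u}
      bag_cover := ?_
      bag_conn := ?_ }) ?_
  · rintro r t' ⟨t, ht, rfl⟩
    obtain ⟨n, hn⟩ := T.bag_cover r t ht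
    exact ⟨n, fun i => Finset.mem_union_left _ (Finset.mem_image_of_mem h (hn i))⟩
  · intro v hv
    by_cases hvu : v = h u
    · refine induce_univ_connected _ T.isTree.1 _ ?_
      ext n
      simp only [Set.mem_setOf_eq, Finset.mem_union, Finset.mem_singleton,
        Set.mem_univ, iff_true]
      exact Or.inr hvu
    · have hvne : v ≠ u := by
        intro hvequ
        obtain ⟨r, t, ⟨t0, ht0, rfl⟩, i, hi⟩ := hv
        have hi' : h (t0 i) = v := hi
        by_cases ht0i : t0 i = u
        · exact hvu (hi'.symm.trans (congrArg h ht0i))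
        · rw [hid _ ht0i] at hi'
          exact ht0i (hi'.trans hvequ)
      have hset : {n : T.ι | v ∈ (T.bag n).image h ∪ {h u}} =
          {n : T.ι | v ∈ T.bag n} := by
        ext n
        simp only [Set.mem_setOf_eq, Finset.mem_union, Finset.mem_singleton,
          Finset.mem_image]
        constructor
        · rintro (⟨z, hz, rfl⟩ | hvhu)
          · rwa [hid z (by rintro rfl; exact hvu rfl)]
          · exact absurd hvhu hvu
        · intro hvb
          exact Or.inl ⟨v, hvb, hid v hvne⟩
      rw [hset]
      refine T.bag_conn v ?_
      obtain ⟨r, t, ⟨t0, ht0, rfl⟩, i, hi⟩ := hv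
      have hi' : h (t0 i) = v := hi
      have ht0i : t0 i ≠ u := by
        rintro heq
        exact hvu (hi'.symm.trans (congrArg h heq))
      rw [hid _ ht0i] at hi'
      exact ⟨r, t0, ht0, i, hi'⟩
  · show (Finset.univ.sup fun n : T.ι =>
        ((T.bag n).image h ∪ {h u}).card) - 1 ≤ _
    rw [← hT]
    refine width_aux _ _ 1 fun n => ?_
    exact (Finset.card_union_le _ _).trans
      (by simpa using add_le_add_right (Finset.card_image_le) 1)

lemma twSet_le {𝒮 : Set (Str Rel ar V)} {b : ℕ∞}
    (h : ∀ S ∈ 𝒮, (tw S : ℕ∞) ≤ b) : twSet 𝒮 ≤ b := iSup₂_le h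

lemma le_twSet {𝒮 : Set (Str Rel ar V)} {S : Str Rel ar V} (h : S ∈ 𝒮) :
    (tw S : ℕ∞) ≤ twSet 𝒮 :=
  le_iSup₂ (f := fun S (_ : S ∈ 𝒮) => ((tw S : ℕ∞))) S h

lemma twSet_mono {A B : Set (Str Rel ar V)} (h : A ⊆ B) : twSet A ≤ twSet B :=
  twSet_le fun S hS => le_twSet (h hS)

/-- The generic "splitting" construction: starting from a model `(S, s)` of a qpf
formula `φ`, produce a model of `φ` in which the equivalence class (under the
equalities of `φ`) of the variable `x0` is mapped to a fresh element `u`; the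
original structure is the image of the new one under the map collapsing `u`. -/
lemma split_model [Infinite V] {φ : SLR Rel ar Pr pa} (hφ : φ.QPF)
    {S : Str Rel ar V} {s : ℕ → V} (hs : Sat Δ S s φ) (x0 : ℕ) (F : Set ℕ)
    (hfinF : F.Finite) (hfv : φ.fv ⊆ F) (hx0 : x0 ∈ F) :
    ∃ (S'' : Str Rel ar V) (s' : ℕ → V) (u : V) (h : V → V),
      Sat Δ S'' s' φ ∧ S = mapStr h S'' ∧
      (∀ r, Set.InjOn (fun t => h ∘ t) (S''.interp r)) ∧
      (∀ w, w ≠ u → h w = w) ∧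
      (∀ y ∈ F, h (s' y) = s y) ∧
      (∀ y, Relation.EqvGen φ.eqOccurs y x0 → s' y = u) ∧
      (∀ y ∈ F, ¬ Relation.EqvGen φ.eqOccurs y x0 → s' y = s y ∧ s' y ≠ u) := by
  classical
  have hFim : (s '' F).Finite := hfinF.image s
  obtain ⟨u, hu⟩ := hFim.infinite_compl.nonempty
  have hu' : u ∉ s '' F := hu
  set s' : ℕ → V := fun y => if Relation.EqvGen φ.eqOccurs y x0 then u else s y
    with hs'
  set h : V → V := fun v => if v = u then s x0 else v with hh
  have hclass : ∀ y, Relation.EqvGen φ.eqOccurs y x0 → s y = s x0 :=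
    fun y hy => eqvGen_sound hφ hs hy
  have hid : ∀ w, w ≠ u → h w = w := fun w hw => if_neg hw
  have hne_u : ∀ y ∈ F, ¬ Relation.EqvGen φ.eqOccurs y x0 → s' y = s y ∧ s' y ≠ u := by
    intro y hy hgen
    have h1 : s' y = s y := if_neg hgen
    refine ⟨h1, ?_⟩
    rw [h1]
    exact fun e => hu' (e ▸ Set.mem_image_of_mem s hy)
  have hupF : ∀ y ∈ F, h (s' y) = s y := by
    intro y hy
    by_cases hgen : Relation.EqvGen φ.eqOccurs y x0
    · have : s' y = u := if_pos hgen
      rw [this, hh]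
      simp only [if_pos rfl]
      exact (hclass y hgen).symm
    · obtain ⟨h1, h2⟩ := hne_u y hy hgen
      rw [h1]
      exact hid _ (h1 ▸ h2)
  have heq : ∀ y z, φ.eqOccurs y z → s' y = s' z := by
    intro y z hocc
    by_cases hy : Relation.EqvGen φ.eqOccurs y x0
    · have hz : Relation.EqvGen φ.eqOccurs z x0 :=
        Relation.EqvGen.trans _ _ _
          (Relation.EqvGen.rel _ _ (eqOccurs_symm hocc)) hy
      rw [hs']
      simp only [if_pos hy, if_pos hz]
    · have hz : ¬ Relation.EqvGen φ.eqOccurs z x0 := fun hz =>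
        hy (Relation.EqvGen.trans _ _ _ (Relation.EqvGen.rel _ _ hocc) hz)
      rw [hs']
      simp only [if_neg hy, if_neg hz]
      exact eqOccurs_sound hφ hs hocc
  obtain ⟨S'', hS'', hmap, hinj⟩ :=
    transfer hφ hs h s' (fun y hy => hupF y (hfv hy)) heq
  exact ⟨S'', s', u, h, hS'', hmap, hinj, hid, hupF,
    fun y hy => if_pos hy, hne_u⟩

lemma part2_lower [Infinite V] {φ : SLR Rel ar Pr pa} (hφ : φ.QPF) {k : ℕ}
    {x0 : ℕ} {x : Fin k → ℕ}
    (hsat : ∃ (Sw : Str Rel ar V) (sw : ℕ → V),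
      Sat Δ Sw sw (starAll φ (List.ofFn fun i => .ne x0 (x i))))
    {S : Str Rel ar V} (hS : S ∈ SMod (V := V) Δ φ) :
    ∃ S' ∈ SMod (V := V) Δ (starAll φ (List.ofFn fun i => .ne x0 (x i))),
      tw S ≤ tw S' + 1 := by
  obtain ⟨s, hs⟩ := hS
  obtain ⟨Sw, sw, hw⟩ := hsat
  have hshape : ∀ χ ∈ (List.ofFn fun i => (SLR.ne x0 (x i) : SLR Rel ar Pr pa)),
      (∃ a b, χ = SLR.eq a b) ∨ ∃ a b, χ = SLR.ne a b := by
    intro χ hχ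
    obtain ⟨i, hi⟩ := (List.mem_ofFn).mp hχ
    exact Or.inr ⟨x0, x i, hi.symm⟩
  obtain ⟨hwφ, hwne⟩ := starAll_elim hshape hw
  have hxnotr : ∀ i : Fin k, ¬ Relation.EqvGen φ.eqOccurs (x i) x0 := by
    intro i hgen
    exact hwne x0 (x i) ((List.mem_ofFn).mpr ⟨i, rfl⟩)
      (eqvGen_sound hφ hwφ hgen).symm
  set F : Set ℕ := φ.fv ∪ ({x0} ∪ Set.range x) with hF
  obtain ⟨S'', s', u, h, hS'', hmap, hinj, hid, hupF, hcls, hncls⟩ :=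
    split_model hφ hs x0 F
      ((fv_finite φ).union ((Set.finite_singleton x0).union (Set.finite_range x)))
      Set.subset_union_left (Or.inr (Or.inl rfl))
  have hs'x0 : s' x0 = u := hcls x0 (Relation.EqvGen.refl x0)
  have hs'xi : ∀ i : Fin k, s' (x i) ≠ u := fun i =>
    (hncls (x i) (Or.inr (Or.inr ⟨i, rfl⟩)) (hxnotr i)).2
  refine ⟨S'', ⟨s', starAll_intro hS'' ?_⟩, ?_⟩
  · intro χ hχ
    obtain ⟨i, hi⟩ := (List.mem_ofFn).mp hχ
    refine ⟨x0, x i, hi.symm, ?_⟩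
    rw [hs'x0]
    exact fun e => hs'xi i e.symm
  · rw [hmap]
    exact tw_mapStr_le h hid S''

lemma part3_lower [Infinite V] {φ : SLR Rel ar Pr pa} (hφ : φ.QPF) {r : Rel}
    {x' : Fin (ar r) → ℕ}
    (hsat : ∃ (Sw : Str Rel ar V) (sw : ℕ → V),
      Sat Δ Sw sw (.star φ (.rel r x')))
    {S : Str Rel ar V} (hS : S ∈ SMod (V := V) Δ φ) :
    ∃ S' ∈ SMod (V := V) Δ (.star φ (.rel r x')), tw S ≤ tw S' + 1 := by
  obtain ⟨s, hs⟩ := hS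
  by_cases hconf : (fun i => s (x' i)) ∈ S.interp r
  · -- the tuple is already present: split the class of some variable
    obtain ⟨a, ha, hta⟩ := mem_relOcc hφ hs hconf
    obtain ⟨Sw, sw, hw⟩ := hsat
    cases hw with
    | star hdw hw1 hw2 =>
      cases hw2 with
      | rel hr2 hother2 =>
        have hall : ¬ ∀ i, Relation.EqvGen φ.eqOccurs (a i) (x' i) := by
          intro hall
          have hmem1 : (fun i => sw (a i)) ∈ _ := relOcc_mem hφ hw1 ha
          have heqw : (fun i => sw (a i)) = fun i => sw (x' i) :=
            funext fun i => eqvGen_sound hφ hw1 (hall i)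
          have hmem2 : (fun i => sw (a i)) ∈ _ := hr2 ▸ (heqw ▸ rfl :
            (fun i => sw (a i)) ∈ ({fun i => sw (x' i)} : Set (Fin (ar r) → _)))
          have := hdw r
          rw [Set.eq_empty_iff_forall_notMem] at this
          exact this _ ⟨hmem1, hmem2⟩
        push_neg at hall
        obtain ⟨i0, hi0⟩ := hall
        set F : Set ℕ := φ.fv ∪ (Set.range x' ∪ {x' i0}) with hF
        obtain ⟨S'', s', u, h, hS'', hmap, hinj, hid, hupF, hcls, hncls⟩ :=
          split_model hφ hs (x' i0) F
            ((fv_finite φ).union ((Set.finite_range x').union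
              (Set.finite_singleton _)))
            Set.subset_union_left (Or.inr (Or.inr rfl))
        have hnot : (fun i => s' (x' i)) ∉ S''.interp r := by
          intro hmem
          have hmema : (fun i => s' (a i)) ∈ S''.interp r := relOcc_mem hφ hS'' ha
          have himg : (fun t => h ∘ t) (fun i => s' (x' i)) =
              (fun t => h ∘ t) (fun i => s' (a i)) := by
            funext i
            show h (s' (x' i)) = h (s' (a i))
            rw [hupF _ (Or.inr (Or.inl ⟨i, rfl⟩)),
              hupF _ (Or.inl (relOcc_fv ha ⟨i, rfl⟩))]
            exact congrFun hta i
          have heq' := hinj r hmem hmema himg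
          have h0 := congrFun heq' i0
          have h1 : s' (x' i0) = u := hcls _ (Relation.EqvGen.refl _)
          have h2 : s' (a i0) ≠ u :=
            (hncls (a i0) (Or.inl (relOcc_fv ha ⟨i0, rfl⟩)) hi0).2
          exact h2 (h0 ▸ h1)
        have hdisj : LocDisj S'' (singStr r (fun i => s' (x' i))) := by
          intro ρ
          by_cases hρ : ρ = r
          · subst hρ
            rw [singStr_interp_self]
            ext t
            simp only [Set.mem_inter_iff, Set.mem_singleton_iff,
              Set.mem_empty_iff_false, iff_false, not_and]
            rintro ht rfl
            exact hnot ht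
          · rw [singStr_interp_ne _ _ hρ, Set.inter_empty]
        refine ⟨S''.comp (singStr r (fun i => s' (x' i))),
          ⟨s', Sat.star hdisj hS'' (sat_singStr s')⟩, ?_⟩
        calc tw S = tw (mapStr h S'') := by rw [hmap]
          _ ≤ tw S'' + 1 := tw_mapStr_le h hid S''
          _ ≤ tw (S''.comp (singStr r (fun i => s' (x' i)))) + 1 :=
            add_le_add_left
              (tw_mono (S2 := S''.comp (singStr r (fun i => s' (x' i))))
                fun ρ t ht => Set.mem_union_left _ ht) 1
  · -- the tuple is fresh: just add it
    have hdisj : LocDisj S (singStr r (fun i => s (x' i))) := by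
      intro ρ
      by_cases hρ : ρ = r
      · subst hρ
        rw [singStr_interp_self]
        ext t
        simp only [Set.mem_inter_iff, Set.mem_singleton_iff,
          Set.mem_empty_iff_false, iff_false, not_and]
        rintro ht rfl
        exact hconf ht
      · rw [singStr_interp_ne _ _ hρ, Set.inter_empty]
    refine ⟨S.comp (singStr r (fun i => s (x' i))),
      ⟨s, Sat.star hdisj hs (sat_singStr s)⟩, ?_⟩
    exact le_trans
      (tw_mono (S2 := S.comp (singStr r (fun i => s (x' i))))
        fun ρ t ht => Set.mem_union_left _ ht) (Nat.le_succ _)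

lemma star_upper {φ ψ : SLR Rel ar Pr pa} (hψ : ψ.QPF) {S : Str Rel ar V}
    (hS : S ∈ SMod (V := V) Δ (.star φ ψ)) :
    ∃ S1 ∈ SMod (V := V) Δ φ, tw S ≤ tw S1 + ψ.fv.ncard := by
  obtain ⟨s, hs⟩ := hS
  cases hs with
  | @star S1 S2 _ _ _ hd h1 h2 =>
    refine ⟨S1, ⟨s, h1⟩, ?_⟩
    refine (tw_comp_le S1 S2).trans (add_le_add_right ?_ _)
    calc S2.supp.ncard ≤ (s '' ψ.fv).ncard :=
          Set.ncard_le_ncard (supp_sub_fv hψ h2) ((fv_finite ψ).image s)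
      _ ≤ ψ.fv.ncard := Set.ncard_image_le (fv_finite ψ)

end Aux

/-- Lemma 2.10: effect on the treewidth of the set of models of the
existential closure of a qpf formula of adding equalities, disequalities, or relation
atoms. -/
theorem qpf_treewidth
    (Rel : Type) [Fintype Rel] (ar : Rel → ℕ) (har : ∀ r, 1 ≤ ar r)
    (V : Type) [Infinite V] (Pr : Type) (pa : Pr → ℕ) (Δ : SID Rel ar Pr pa)
    (φ ψ : SLR Rel ar Pr pa) (hφ : φ.QPF) (hψ : ψ.QPF)
    (k : ℕ) (r : Rel) (hk : ar r = k) (x0 : ℕ) (x : Fin k → ℕ) :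
    (twSet (SMod (V := V) Δ (starAll φ (List.ofFn fun i => .eq x0 (x i)))) ≤
        twSet (SMod (V := V) Δ φ)) ∧
    ((∃ (S : Str Rel ar V) (s : ℕ → V),
        Sat Δ S s (starAll φ (List.ofFn fun i => .ne x0 (x i)))) →
      twSet (SMod (V := V) Δ φ) ≤
          twSet (SMod (V := V) Δ (starAll φ (List.ofFn fun i => .ne x0 (x i)))) + 1 ∧
        twSet (SMod (V := V) Δ (starAll φ (List.ofFn fun i => .ne x0 (x i)))) ≤
          twSet (SMod (V := V) Δ φ)) ∧
    ((∃ (S : Str Rel ar V) (s : ℕ → V),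
        Sat Δ S s (.star φ (.rel r fun i => x (Fin.cast hk i)))) →
      twSet (SMod (V := V) Δ φ) ≤
          twSet (SMod (V := V) Δ (.star φ (.rel r fun i => x (Fin.cast hk i)))) + 1 ∧
        twSet (SMod (V := V) Δ (.star φ (.rel r fun i => x (Fin.cast hk i)))) ≤
          twSet (SMod (V := V) Δ φ) + (k : ℕ∞)) ∧
    (ψ.RelOnly →
      twSet (SMod (V := V) Δ (.star φ ψ)) ≤
        twSet (SMod (V := V) Δ φ) + ((ψ.fv.ncard : ℕ) : ℕ∞)) := by
  refine ⟨?_, ?_, ?_, ?_⟩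
  · -- (1) adding equalities
    refine twSet_mono ?_
    rintro S ⟨s, hsat⟩
    have hshape : ∀ χ ∈ (List.ofFn fun i => (SLR.eq x0 (x i) : SLR Rel ar Pr pa)),
        (∃ a b, χ = SLR.eq a b) ∨ ∃ a b, χ = SLR.ne a b := by
      intro χ hχ
      obtain ⟨i, hi⟩ := (List.mem_ofFn).mp hχ
      exact Or.inl ⟨x0, x i, hi.symm⟩
    exact ⟨s, (starAll_elim hshape hsat).1⟩
  · -- (2) adding disequalities
    intro hsat
    constructor
    · refine twSet_le fun S hS => ?_
      obtain ⟨S', hS', hle⟩ := part2_lower hφ hsat hS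
      calc ((tw S : ℕ∞)) ≤ ((tw S' + 1 : ℕ) : ℕ∞) := Nat.cast_le.mpr hle
        _ = (tw S' : ℕ∞) + 1 := by push_cast; rfl
        _ ≤ _ + 1 := add_le_add_left (le_twSet hS') 1
    · refine twSet_mono ?_
      rintro S ⟨s, hsatS⟩
      have hshape : ∀ χ ∈ (List.ofFn fun i => (SLR.ne x0 (x i) : SLR Rel ar Pr pa)),
          (∃ a b, χ = SLR.eq a b) ∨ ∃ a b, χ = SLR.ne a b := by
        intro χ hχ
        obtain ⟨i, hi⟩ := (List.mem_ofFn).mp hχ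
        exact Or.inr ⟨x0, x i, hi.symm⟩
      exact ⟨s, (starAll_elim hshape hsatS).1⟩
  · -- (3) adding a relation atom
    intro hsat
    constructor
    · refine twSet_le fun S hS => ?_
      obtain ⟨S', hS', hle⟩ := part3_lower hφ hsat hS
      calc ((tw S : ℕ∞)) ≤ ((tw S' + 1 : ℕ) : ℕ∞) := Nat.cast_le.mpr hle
        _ = (tw S' : ℕ∞) + 1 := by push_cast; rfl
        _ ≤ _ + 1 := add_le_add_left (le_twSet hS') 1
    · refine twSet_le fun S hS => ?_
      obtain ⟨S1, hS1, hle⟩ :=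
        star_upper (ψ := .rel r fun i => x (Fin.cast hk i)) trivial hS
      have hncard :
          (SLR.rel r fun i => x (Fin.cast hk i) : SLR Rel ar Pr pa).fv.ncard ≤ k := by
        show (Set.range fun i => x (Fin.cast hk i)).ncard ≤ k
        calc (Set.range fun i => x (Fin.cast hk i)).ncard
            = ((fun i => x (Fin.cast hk i)) '' Set.univ).ncard := by
              rw [Set.image_univ]
          _ ≤ (Set.univ : Set (Fin (ar r))).ncard := Set.ncard_image_le Set.finite_univ
          _ = k := by
              rw [Set.ncard_univ, Nat.card_eq_fintype_card, Fintype.card_fin, hk]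
      calc ((tw S : ℕ∞))
          ≤ ((tw S1 + (SLR.rel r fun i => x (Fin.cast hk i) :
              SLR Rel ar Pr pa).fv.ncard : ℕ) : ℕ∞) := Nat.cast_le.mpr hle
        _ = (tw S1 : ℕ∞) + ((SLR.rel r fun i => x (Fin.cast hk i) :
              SLR Rel ar Pr pa).fv.ncard : ℕ∞) := by push_cast; rfl
        _ ≤ twSet (SMod (V := V) Δ φ) + (k : ℕ∞) :=
            add_le_add (le_twSet hS1) (Nat.cast_le.mpr hncard)
  · -- (4) adding a formula with only relation atoms
    intro _
    refine twSet_le fun S hS => ?_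
    obtain ⟨S1, hS1, hle⟩ := star_upper hψ hS
    calc ((tw S : ℕ∞)) ≤ ((tw S1 + ψ.fv.ncard : ℕ) : ℕ∞) := Nat.cast_le.mpr hle
      _ = (tw S1 : ℕ∞) + ((ψ.fv.ncard : ℕ) : ℕ∞) := by push_cast; rfl
      _ ≤ _ := add_le_add_left (le_twSet hS1) _

end SLRTW
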